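/- Let G = (ℤ/pℤ)^n, the direct product of n copies of the cyclic group of prime order p. Then for every generating set S of G, every element of G is a product of at most n·⌊p/2⌋ elements of S ∪ S⁻¹; i.e., diam(G) ≤ n·⌊p/2⌋. -/

import Mathlib

open Pointwise

lemma helper_concat {ι M : Type*} [AddCommMonoid M] (s : Finset ι) (f : ι → M)
    (g : ι → List M) (k : ℕ) (hlen : ∀ i ∈ s, (g i).length ≤ k)
    (hsum : ∀ i ∈ s, (g i).sum = f i) :
    ∃ L : List M, L.length ≤ s.card * k ∧ (∀ a ∈ L, ∃ i ∈ s, a ∈ g i) ∧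
      L.sum = ∑ i ∈ s, f i := by
  classical
  induction s using Finset.induction with
  | empty => exact ⟨[], by simp, by simp, by simp⟩
  | insert i s hx ih =>
    obtain ⟨L, hL1, hL2, hL3⟩ := ih (fun j hj => hlen j (by simp [hj]))
      (fun j hj => hsum j (by simp [hj]))
    refine ⟨g i ++ L, ?_, ?_, ?_⟩
    · simp only [List.length_append, Finset.card_insert_of_notMem hx]
      calc (g i).length + L.length ≤ k + s.card * k := add_le_add (hlen i (by simp)) hL1
        _ = (s.card + 1) * k := by ring
    · intro a ha
      rcases List.mem_append.mp ha with h | h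
      · exact ⟨i, by simp, h⟩
      · obtain ⟨j, hj, hj2⟩ := hL2 a h
        exact ⟨j, by simp [hj], hj2⟩
    · rw [List.sum_append, hL3, Finset.sum_insert hx, hsum i (by simp)]

theorem stmt_16 (p n : ℕ) (hp : p.Prime) (hn : 1 ≤ n)
    (S : Set (Fin n → ZMod p)) (hS : AddSubgroup.closure S = ⊤)
    (x : Fin n → ZMod p) :
    ∃ L : List (Fin n → ZMod p), L.length ≤ n * (p / 2) ∧
      (∀ a ∈ L, a ∈ S ∪ (-S)) ∧ L.sum = x := by
  classical
  haveI : Fact p.Prime := ⟨hp⟩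
  have hspan : Submodule.span (ZMod p) S = ⊤ := by
    have h1 : AddSubgroup.closure S ≤ (Submodule.span (ZMod p) S).toAddSubgroup :=
      (AddSubgroup.closure_le _).mpr Submodule.subset_span
    rw [hS] at h1
    exact eq_top_iff.mpr fun y _ => h1 trivial
  obtain ⟨t, hts, htspan, htli⟩ := exists_linearIndependent (ZMod p) S
  have htop : ⊤ ≤ Submodule.span (ZMod p) (Set.range ((↑) : t → (Fin n → ZMod p))) := by
    rw [Subtype.range_coe, htspan, hspan]
  let b : Module.Basis t (ZMod p) (Fin n → ZMod p) := Module.Basis.mk htli htop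
  haveI : Fintype t := FiniteDimensional.fintypeBasisIndex b
  have hcard : Fintype.card t = n := by
    rw [← Module.finrank_eq_card_basis b, Module.finrank_fin_fun]
  -- coefficients
  have hrepr : ∑ i : t, (b.repr x i) • (i : Fin n → ZMod p) = x := by
    conv_rhs => rw [← b.sum_repr x]
    refine Finset.sum_congr rfl fun i _ => ?_
    rw [Module.Basis.mk_apply]
  have key := helper_concat (Finset.univ : Finset t)
    (fun i => (b.repr x i) • (i : Fin n → ZMod p))
    (fun i => List.replicate (b.repr x i).valMinAbs.natAbs
      (if 0 ≤ (b.repr x i).valMinAbs then (i : Fin n → ZMod p) else -(i : Fin n → ZMod p)))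
    (p / 2)
    (fun i _ => by simpa using ZMod.natAbs_valMinAbs_le (b.repr x i))
    (fun i _ => by
      rw [List.sum_replicate]
      set m := (b.repr x i).valMinAbs with hm
      have : (b.repr x i) • (i : Fin n → ZMod p) = m • (i : Fin n → ZMod p) := by
        rw [← Int.cast_smul_eq_zsmul (ZMod p), ZMod.coe_valMinAbs]
      rw [this]
      by_cases h : 0 ≤ m
      · rw [if_pos h]
        rw [← natCast_zsmul, Int.natAbs_of_nonneg h]
      · rw [if_neg h]
        rw [← natCast_zsmul, Int.ofNat_natAbs_of_nonpos (le_of_not_ge h), neg_zsmul, smul_neg, neg_neg])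
  obtain ⟨L, hL1, hL2, hL3⟩ := key
  refine ⟨L, ?_, ?_, ?_⟩
  · simpa [hcard] using hL1
  · intro a ha
    obtain ⟨i, _, hi⟩ := hL2 a ha
    have := List.eq_of_mem_replicate hi
    subst this
    by_cases h : 0 ≤ (b.repr x i).valMinAbs
    · rw [if_pos h]; exact Or.inl (hts i.2)
    · rw [if_neg h]; exact Or.inr (Set.neg_mem_neg.mpr (hts i.2))
  · rw [hL3, hrepr]
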